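/- Fix a vector b̲ = (ℓ_1,…,ℓ_b) of positive even integers. Every polynomial p in the space P_{b̲} of polynomials of type b̲ has a unique decomposition (q_1,…,q_b); equivalently, the coefficients a_1,…,a_b (and hence the maps q_1,…,q_b) are uniquely determined by p. -/

import Mathlib

open Set Filter Topology

noncomputable section

/-- The interval `I = [-1,1]`. -/
def unitI : Set ℝ := Set.Icc (-1 : ℝ) 1



/-! ### The interval `I = [-1,1]` and basic dynamical notions -/


/-- The set of periods of periodic points of `f` lying in `D`. -/
def PeriodSetOn (f : ℝ → ℝ) (D : Set ℝ) : Set ℕ :=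
  {n | 0 < n ∧ ∃ p ∈ D, f^[n] p = p}

/-- The set of periods `Per(f)` of an interval map `f : I → I`. -/
def PeriodSet (f : ℝ → ℝ) : Set ℕ := PeriodSetOn f unitI

/-- The set `{2^n : n ∈ ℕ}`. -/
def PowersOfTwo : Set ℕ := {m | ∃ n : ℕ, m = 2 ^ n}

/-- `f` is monotone (increasing or decreasing) on `s`. -/
def MonotoneOrAntitoneOn (f : ℝ → ℝ) (s : Set ℝ) : Prop :=
  MonotoneOn f s ∨ AntitoneOn f s

/-- `[u,v]` can be divided into `n` consecutive intervals on each of which `f`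
is monotone; hence the lap number of `f` on `[u,v]` is at most `n`. -/
def LapBoundOn (f : ℝ → ℝ) (u v : ℝ) (n : ℕ) : Prop :=
  ∃ x : Fin (n + 1) → ℝ, StrictMono x ∧ x 0 = u ∧ x (Fin.last n) = v ∧
    ∀ i : Fin n, MonotoneOrAntitoneOn f (Set.Icc (x i.castSucc) (x i.succ))

/-- The lap number `ℓ(f)` of a piecewise monotone map `f` of `[u,v]`:
the least number of maximal intervals of monotonicity. -/
def lapNumberOn (f : ℝ → ℝ) (u v : ℝ) : ℕ :=
  sInf {n | LapBoundOn f u v n}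

/-- Topological entropy of a piecewise monotone map of `[u,v]`,
`h(f) = lim (1/n) log ℓ(fⁿ)` (as an upper limit). -/
def topEntropyOn (f : ℝ → ℝ) (u v : ℝ) : ℝ :=
  Filter.limsup (fun n : ℕ => Real.log (lapNumberOn (f^[n]) u v) / (n : ℝ)) Filter.atTop

/-- Topological entropy of a piecewise monotone map of `I = [-1,1]`. -/
def topEntropy (f : ℝ → ℝ) : ℝ := topEntropyOn f (-1) 1

/-- `c` is a turning point (an isolated local extremum) of `f` lying in the interior
of the domain `K`. -/
def TurningPtIn (f : ℝ → ℝ) (K : Set ℝ) (c : ℝ) : Prop :=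
  c ∈ interior K ∧
  ((∃ ε > 0, ∀ x ∈ Set.Ioo (c - ε) (c + ε), x ≠ c → f x < f c) ∨
   (∃ ε > 0, ∀ x ∈ Set.Ioo (c - ε) (c + ε), x ≠ c → f c < f x))

/-- A turning point of an interval map `f : I → I`. -/
def TurningPoint (f : ℝ → ℝ) (c : ℝ) : Prop := TurningPtIn f unitI c

/-- A multimodal map: a continuous piecewise monotone map `f : I → I` with
`f(∂I) ⊆ ∂I`. -/
structure Multimodal (f : ℝ → ℝ) : Prop where
  cont : ContinuousOn f unitI
  maps : Set.MapsTo f unitI unitI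
  bdry : f (-1) ∈ ({-1, 1} : Set ℝ) ∧ f 1 ∈ ({-1, 1} : Set ℝ)
  pm : ∃ n, LapBoundOn f (-1) 1 n

/-- A continuous piecewise monotone map `f : I → I`. -/
def PiecewiseMonotone (f : ℝ → ℝ) : Prop :=
  ContinuousOn f unitI ∧ Set.MapsTo f unitI unitI ∧ ∃ n, LapBoundOn f (-1) 1 n

/-! ### Smooth multimodal maps and the spaces `A^k_b(I)` -/

/-- A `C^k` multimodal map: `f` is multimodal and `C^k` on a neighbourhood of `I`. -/
def CkMultimodal (k : ℕ) (f : ℝ → ℝ) : Prop :=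
  Multimodal f ∧ ∃ U : Set ℝ, IsOpen U ∧ unitI ⊆ U ∧ ContDiffOn ℝ (k : ℕ∞) f U

/-- The `C^k` distance `‖f - g‖_{C^k(I)}` (sum over `0 ≤ i ≤ k` of the sup of the
`i`-th derivatives on `I`). -/
def CkDist (k : ℕ) (f g : ℝ → ℝ) : ℝ :=
  ∑ i ∈ Finset.range (k + 1),
    ⨆ x : unitI, |iteratedDeriv i f (x : ℝ) - iteratedDeriv i g (x : ℝ)|

/-- `c` is a critical point of `f` of order `ℓ`: near `c`,
`f(x) = ± φ(x-c)^ℓ + f(c)` for a local `C^k` diffeomorphism `φ` with `φ(0) = 0`. -/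
def CritOrder (k : ℕ∞) (f : ℝ → ℝ) (c : ℝ) (ℓ : ℕ) : Prop :=
  ∃ ε > 0, ∃ φ : ℝ → ℝ, φ 0 = 0 ∧ deriv φ 0 ≠ 0 ∧
    ContDiffOn ℝ k φ (Set.Ioo (-ε) ε) ∧ Set.InjOn φ (Set.Ioo (-ε) ε) ∧
    ((∀ x ∈ Set.Ioo (c - ε) (c + ε), f x = (φ (x - c)) ^ ℓ + f c) ∨
     (∀ x ∈ Set.Ioo (c - ε) (c + ε), f x = -((φ (x - c)) ^ ℓ) + f c))

/-- `f` has finitely many parabolic cycles: finitely many periodic points whose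
multiplier has absolute value one. -/
def FinitelyManyParabolic (f : ℝ → ℝ) : Prop :=
  {p : ℝ | p ∈ unitI ∧ ∃ n, 0 < n ∧ f^[n] p = p ∧ |deriv (f^[n]) p| = 1}.Finite

/-- The space `A^k_{b̲}(I)` of `C^k` multimodal maps with finitely many parabolic
cycles and exactly `b` critical points `c₁ < ⋯ < c_b`, `cᵢ` of order `ℓᵢ = bvec i`. -/
structure SpaceA (k : ℕ∞) {b : ℕ} (bvec : Fin b → ℕ) (f : ℝ → ℝ) : Prop where
  multimodal : Multimodal f
  smooth : ∃ U : Set ℝ, IsOpen U ∧ unitI ⊆ U ∧ ContDiffOn ℝ k f U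
  parabolic : FinitelyManyParabolic f
  crit : ∃ c : Fin b → ℝ, StrictMono c ∧ (∀ i, c i ∈ Set.Ioo (-1 : ℝ) 1) ∧
      (∀ i, CritOrder k f (c i) (bvec i)) ∧
      {x ∈ Set.Ioo (-1 : ℝ) 1 | deriv f x = 0} = Set.range c

/-- The space `A_{b̲}(I)` of real-analytic maps in `A^∞_{b̲}(I)`. -/
def SpaceAomega {b : ℕ} (bvec : Fin b → ℕ) (f : ℝ → ℝ) : Prop :=
  SpaceA ⊤ bvec f ∧ ∃ U : Set ℝ, IsOpen U ∧ unitI ⊆ U ∧ AnalyticOnNhd ℝ f U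

/-- The space `A^r_{b̲}(I)` for a real smoothness exponent `r = k + α`:
`C^k` together with an `α`-Hölder condition on the `k`-th derivative. -/
def SpaceAr (r : ℝ) {b : ℕ} (bvec : Fin b → ℕ) (f : ℝ → ℝ) : Prop :=
  SpaceA (⌊r⌋₊ : ℕ∞) bvec f ∧
  ∃ C : NNReal, HolderOnWith C (Real.toNNReal (r - (⌊r⌋₊ : ℝ)))
    (iteratedDeriv ⌊r⌋₊ f) unitI

/-- The space `A^r_{even,b}(I)`: the union of the `A^r_{b̲}(I)` over all `b`-tuples
`b̲` with all entries even. -/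
def SpaceArEven (r : ℝ) (b : ℕ) (f : ℝ → ℝ) : Prop :=
  ∃ bvec : Fin b → ℕ, (∀ i, Even (bvec i) ∧ 2 ≤ bvec i) ∧ SpaceAr r bvec f

/-- All critical points of `f` (in the interior of `I`) are non-degenerate. -/
def NonDegCrit (f : ℝ → ℝ) : Prop :=
  ∀ x ∈ Set.Ioo (-1 : ℝ) 1, deriv f x = 0 → deriv (deriv f) x ≠ 0

/-! ### Restrictive intervals and renormalization -/

/-- Auxiliary predicate: `[a,b] ⊆ K` is a proper subinterval whose first `n`
iterates have pairwise disjoint interiors, with `fⁿ([a,b]) ⊆ [a,b]`,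
`fⁿ({a,b}) ⊆ {a,b}`, and whose orbit contains a turning point of `f|_K`. -/
structure RIAuxIn (f : ℝ → ℝ) (K : Set ℝ) (a b : ℝ) (n : ℕ) : Prop where
  lt : a < b
  sub : Set.Icc a b ⊆ K
  proper : Set.Icc a b ≠ K
  pos : 0 < n
  disj : ∀ i j : ℕ, i < j → j < n →
    interior (f^[i] '' Set.Icc a b) ∩ interior (f^[j] '' Set.Icc a b) = ∅
  inv : f^[n] '' Set.Icc a b ⊆ Set.Icc a b
  bdryInv : f^[n] a ∈ ({a, b} : Set ℝ) ∧ f^[n] b ∈ ({a, b} : Set ℝ)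
  turning : ∃ i < n, ∃ c, TurningPtIn f K c ∧ c ∈ f^[i] '' Set.Icc a b

/-- A restrictive interval of period `n` of `f|_K` (maximal among such intervals
of period `n`). -/
def RestrictiveIntervalIn (f : ℝ → ℝ) (K : Set ℝ) (J : Set ℝ) (n : ℕ) : Prop :=
  ∃ a b : ℝ, J = Set.Icc a b ∧ RIAuxIn f K a b n ∧
    ∀ a' b' : ℝ, RIAuxIn f K a' b' n → Set.Icc a b ⊆ Set.Icc a' b' →
      Set.Icc a' b' = Set.Icc a b

/-- A restrictive interval of period `n` for the interval map `f` of `[u,v]`. -/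
def RestrictiveIntervalOn (f : ℝ → ℝ) (u v : ℝ) (J : Set ℝ) (n : ℕ) : Prop :=
  RestrictiveIntervalIn f (Set.Icc u v) J n

/-- A restrictive interval of period `n` for the interval map `f : I → I`. -/
def RestrictiveInterval (f : ℝ → ℝ) (J : Set ℝ) (n : ℕ) : Prop :=
  RestrictiveIntervalIn f unitI J n

/-- A restrictive interval of `f|_K` which is maximal (outermost) among all
restrictive intervals of `f|_K` of all periods. -/
def OutermostRIIn (f : ℝ → ℝ) (K : Set ℝ) (J : Set ℝ) (n : ℕ) : Prop :=
  ∃ a b : ℝ, J = Set.Icc a b ∧ RIAuxIn f K a b n ∧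
    ∀ a' b' : ℝ, ∀ n' : ℕ, RIAuxIn f K a' b' n' → Set.Icc a b ⊆ Set.Icc a' b' →
      Set.Icc a' b' = Set.Icc a b

/-- `f` is infinitely renormalizable: it has restrictive intervals of arbitrarily
large period. -/
def InfinitelyRenormalizable (f : ℝ → ℝ) : Prop :=
  ∀ N : ℕ, ∃ (J : Set ℝ) (n : ℕ), N < n ∧ RestrictiveInterval f J n

/-- The sets `K_n` of the decomposition of the non-wandering set: `K_0 = I` and
`K_{n+1}` is the union of all maximal restrictive intervals of `f|_{K_n}`. -/
def Kset (f : ℝ → ℝ) : ℕ → Set ℝ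
  | 0 => unitI
  | n + 1 => ⋃₀ {J | ∃ m, OutermostRIIn f (Kset f n) J m}

/-- `x` is a non-wandering point of the interval map `f : I → I`. -/
def NonWandering (f : ℝ → ℝ) (x : ℝ) : Prop :=
  x ∈ unitI ∧ ∀ U : Set ℝ, IsOpen U → x ∈ U →
    ∃ n : ℕ, 0 < n ∧ (f^[n] '' (U ∩ unitI) ∩ U).Nonempty

/-! ### Omega-limit sets, attractors and essential conjugacy -/

/-- The ω-limit set of `x` under `f`. -/
def omegaLimitSet (f : ℝ → ℝ) (x : ℝ) : Set ℝ :=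
  ⋂ N : ℕ, closure {y | ∃ n : ℕ, N ≤ n ∧ f^[n] x = y}

/-- `p` is an attracting periodic point of `f` of period `n`. -/
def AttractingPeriodic (f : ℝ → ℝ) (p : ℝ) (n : ℕ) : Prop :=
  0 < n ∧ p ∈ unitI ∧ f^[n] p = p ∧
    ∃ ε > 0, ∀ y ∈ unitI, |y - p| < ε →
      Filter.Tendsto (fun k => f^[n * k] y) Filter.atTop (nhds p)

/-- The union of the basins of attraction of the (attracting) periodic orbits of `f`. -/
def basinPts (f : ℝ → ℝ) : Set ℝ :=
  {x | x ∈ unitI ∧ ∃ p n m, AttractingPeriodic f p n ∧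
    Filter.Tendsto (fun k => f^[n * k + m] x) Filter.atTop (nhds p)}

/-- `f` and `g` are essentially conjugate: topologically conjugate outside their
basins of attraction. -/
def EssentiallyConjugate (f g : ℝ → ℝ) : Prop :=
  ∃ h : ℝ → ℝ, Set.BijOn h (unitI \ basinPts f) (unitI \ basinPts g) ∧
    ContinuousOn h (unitI \ basinPts f) ∧
    ContinuousOn (Function.invFunOn h (unitI \ basinPts f)) (unitI \ basinPts g) ∧
    ∀ x ∈ unitI \ basinPts f, h (f x) = g (h x)

/-! ### Polynomials of type `b̲` -/

/-- `q = A⁻¹ ∘ p ∘ A` where `p(z) = z^ℓ + a` has an invariant interval `J` and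
`A : I → J` is an affine bijection. -/
def IsQFactor (ℓ : ℕ) (a : ℝ) (q : ℝ → ℝ) : Prop :=
  ∃ α β : ℝ, α ≠ 0 ∧
    (∀ z ∈ (fun x : ℝ => α * x + β) '' unitI,
        z ^ ℓ + a ∈ (fun x : ℝ => α * x + β) '' unitI) ∧
    (∀ x : ℝ, α * q x + β = (α * x + β) ^ ℓ + a)

/-- `p` is a polynomial of type `b̲` with decomposition `(q₁, …, q_b)` and
coefficients `(a₁, …, a_b)`. -/
structure IsPolyType {b : ℕ} (bvec : Fin b → ℕ) (p : ℝ → ℝ) (a : Fin b → ℝ)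
    (q : Fin b → ℝ → ℝ) : Prop where
  posb : 0 < b
  factor : ∀ i, IsQFactor (bvec i) (a i) (q i)
  maps : ∀ i, Set.MapsTo (q i) unitI unitI
  endpts : ∀ i, q i (-1) = -1 ∧ q i 1 = -1
  mid : ∀ i : Fin b, (i : ℕ) + 1 ≠ b → 0 < q i 0
  comp : ∀ x : ℝ, p x = (List.ofFn q).foldl (fun y g => g y) x

/-- An enumeration, in increasing order, of all turning points of `f`. -/
def TurningEnum (f : ℝ → ℝ) {r : ℕ} (c : Fin r → ℝ) : Prop :=
  StrictMono c ∧ (∀ i, TurningPoint f (c i)) ∧ ∀ x, TurningPoint f x → x ∈ Set.range c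

/-- `f` and `g` have the same shape: they have the same number of turning points and
the order relations among the corresponding critical values coincide. -/
def SameShape (f g : ℝ → ℝ) : Prop :=
  ∃ (r : ℕ) (c d : Fin r → ℝ), TurningEnum f c ∧ TurningEnum g d ∧
    ∀ i j, f (c i) < f (c j) ↔ g (d i) < g (d j)

/-- `f` and `g` have the same critical values at corresponding turning points. -/
def SameShapeValues (f g : ℝ → ℝ) : Prop :=
  ∃ (r : ℕ) (c d : Fin r → ℝ), TurningEnum f c ∧ TurningEnum g d ∧
    ∀ i, f (c i) = g (d i)





/-! ### Stunted sawtooth maps -/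

/-- The slope `λ = m + 2`. -/
def sawLam (m : ℕ) : ℝ := (m : ℝ) + 2

/-- The endpoint `e = mλ/(λ-1)` of the domain `[-e,e]`. -/
def sawE (m : ℕ) : ℝ := (m : ℝ) * sawLam m / (sawLam m - 1)

/-- The domain `[-e,e]` of the sawtooth maps. -/
def sawDom (m : ℕ) : Set ℝ := Set.Icc (-(sawE m)) (sawE m)

/-- The turning points `c_i = -m+1, -m+3, …, m-1`. -/
def sawC (m : ℕ) (i : Fin m) : ℝ := -(m : ℝ) + 1 + 2 * (i : ℕ)

/-- The basic piecewise linear sawtooth map `S₀` with turning points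
`-m+1, -m+3, …, m-1`, slopes `±λ` and extremal values `±λ`; `ε = ±1` is its basic
shape (`ε = 1` iff `S₀` is increasing at the left endpoint). -/
def sawS0 (m : ℕ) (ε : ℤ) (x : ℝ) : ℝ :=
  sawLam m *
    (|Int.fract ((x - (if ε = 1 then (-(m : ℝ) + 1) else (-(m : ℝ) + 3))) / 4) * 4 - 2| - 1)

/-- The sign of the turning point `c_i`: `+1` if `c_i` is a maximum of `S₀`,
`-1` if it is a minimum. -/
def sawSign (m : ℕ) (ε : ℤ) (i : Fin m) : ℝ := by
  classical exact if sawS0 m ε (sawC m i) = sawLam m then 1 else -1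

/-- A stunted sawtooth map `T` with plateaus `Z i` (closed symmetric intervals
around the turning points `c_i`, with pairwise disjoint interiors) on which `T` is
constant with value `v i ∈ [-e,e]`, and which agrees with `S₀` off the plateaus. -/
structure IsStunted (m : ℕ) (ε : ℤ) (T : ℝ → ℝ) (Z : Fin m → Set ℝ) (v : Fin m → ℝ) :
    Prop where
  plateau : ∀ i, ∃ δ : ℝ, 0 ≤ δ ∧ Z i = Set.Icc (sawC m i - δ) (sawC m i + δ)
  subDom : ∀ i, Z i ⊆ sawDom m
  disj : ∀ i j, i ≠ j → interior (Z i) ∩ interior (Z j) = ∅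
  agree : ∀ x ∈ sawDom m, x ∉ ⋃ i, Z i → T x = sawS0 m ε x
  plateauVal : ∀ i, v i ∈ sawDom m ∧ ∀ x ∈ Z i, T x = v i
  cont : ContinuousOn T (sawDom m)
  maps : Set.MapsTo T (sawDom m) (sawDom m)





/-! ### Polynomial-like maps -/

/-- A polynomial-like map of degree `d`: a proper holomorphic degree-`d` branched
covering `F : U → V` between simply connected domains with `U ⋐ V`. -/
structure PolyLikeMap (F : ℂ → ℂ) (U V : Set ℂ) (d : ℕ) : Prop where
  openU : IsOpen U
  openV : IsOpen V
  neU : U.Nonempty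
  cpt : IsCompact (closure U)
  subUV : closure U ⊆ V
  connU : IsPreconnected U
  connV : IsPreconnected V
  simpU : SimplyConnectedSpace U
  simpV : SimplyConnectedSpace V
  holo : DifferentiableOn ℂ F U
  mapsto : Set.MapsTo F U V
  proper : ∀ K : Set ℂ, K ⊆ V → IsCompact K → IsCompact (U ∩ F ⁻¹' K)
  surj : Set.SurjOn F U V
  degree : ∀ w ∈ V, (∀ z ∈ U ∩ F ⁻¹' {w}, deriv F z ≠ 0) → (U ∩ F ⁻¹' {w}).ncard = d

/-- A proper holomorphic degree-`d` branched covering between simply connected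
domains with exactly one ramification point. -/
structure BranchedCover (F : ℂ → ℂ) (U V : Set ℂ) (d : ℕ) : Prop where
  openU : IsOpen U
  openV : IsOpen V
  neU : U.Nonempty
  connU : IsPreconnected U
  connV : IsPreconnected V
  simpU : SimplyConnectedSpace U
  simpV : SimplyConnectedSpace V
  holo : DifferentiableOn ℂ F U
  mapsto : Set.MapsTo F U V
  proper : ∀ K : Set ℂ, K ⊆ V → IsCompact K → IsCompact (U ∩ F ⁻¹' K)
  surj : Set.SurjOn F U V
  oneCrit : ∃! z : ℂ, z ∈ U ∧ deriv F z = 0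
  degree : ∀ w ∈ V, (∀ z ∈ U ∩ F ⁻¹' {w}, deriv F z ≠ 0) → (U ∩ F ⁻¹' {w}).ncard = d

/-- The composition `F_b ∘ ⋯ ∘ F_1` (applying `F_1` first). -/
def compFold {b : ℕ} (Fi : Fin b → ℂ → ℂ) (z : ℂ) : ℂ :=
  (List.ofFn Fi).foldl (fun w g => g w) z

/-- A polynomial-like map of type `b̲ = (ℓ₁, …, ℓ_b)`: a composition of
branched coverings `F_i : U_i → U_{i+1}` of degree `ℓᵢ`, each with exactly one
ramification point, with `U ⋐ V`. -/
def PolyLikeType {b : ℕ} (bvec : Fin b → ℕ) (F : ℂ → ℂ) (U V : Set ℂ) : Prop :=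
  IsCompact (closure U) ∧ closure U ⊆ V ∧
  ∃ (W : Fin (b + 1) → Set ℂ) (Fi : Fin b → ℂ → ℂ),
    W 0 = U ∧ W (Fin.last b) = V ∧
    (∀ i : Fin b, BranchedCover (Fi i) (W i.castSucc) (W i.succ) (bvec i)) ∧
    ∀ z ∈ U, F z = compFold Fi z

/-- `F : U → V` is real-symmetric: `U`, `V` are invariant under complex conjugation
and `F` commutes with it. -/
def RealSymPL (F : ℂ → ℂ) (U V : Set ℂ) : Prop :=
  (∀ z ∈ U, (starRingEnd ℂ) z ∈ U) ∧ (∀ z ∈ V, (starRingEnd ℂ) z ∈ V) ∧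
  ∀ z ∈ U, F ((starRingEnd ℂ) z) = (starRingEnd ℂ) (F z)





/-! ### Topologies on spaces of maps, cells, and Banach submanifolds -/

/-- Index type for the `C^{k+α}` jet of a map: the `k+1` derivatives on `I`,
together with the Hölder quotients of the `k`-th derivative. -/
abbrev jIdx (k : ℕ) : Type := (Fin (k + 1) × ↥unitI) ⊕ (↥unitI × ↥unitI)

/-- The `C^r` jet data of `f` (`r = k + α`): its derivatives of order `≤ k = ⌊r⌋` on
`I` and the `α`-Hölder quotients of its `k`-th derivative. -/
def jetFun (r : ℝ) (f : ℝ → ℝ) : jIdx ⌊r⌋₊ → ℝ :=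
  Sum.elim (fun q : Fin (⌊r⌋₊ + 1) × ↥unitI => iteratedDeriv q.1 f (q.2 : ℝ))
    (fun q : ↥unitI × ↥unitI =>
      (iteratedDeriv ⌊r⌋₊ f (q.1 : ℝ) - iteratedDeriv ⌊r⌋₊ f (q.2 : ℝ)) /
        |(q.1 : ℝ) - (q.2 : ℝ)| ^ (r - (⌊r⌋₊ : ℝ)))

/-- The `C^r` topology on maps of `I`: uniform convergence of the `C^r` jet data. -/
def crTop (r : ℝ) : TopologicalSpace (ℝ → ℝ) :=
  TopologicalSpace.induced (fun f => UniformFun.ofFun (jetFun r f)) inferInstance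

/-- The `C^0` topology on maps of `I`: uniform convergence on `I`. -/
def c0Top : TopologicalSpace (ℝ → ℝ) :=
  TopologicalSpace.induced
    (fun f => UniformFun.ofFun (fun x : ↥unitI => f (x : ℝ))) inferInstance

/-- The `C^r` jet of `f` as a point of the Banach space of bounded continuous
functions (junk value `0` if the jet is not bounded continuous). -/
def jetR (r : ℝ) (f : ℝ → ℝ) : BoundedContinuousFunction (jIdx ⌊r⌋₊) ℝ := by
  classical
  exact if h : ∃ g : BoundedContinuousFunction (jIdx ⌊r⌋₊) ℝ, ∀ p, g p = jetFun r f p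
    then h.choose else 0

/-- `S` has (topologically flat) codimension `k` at `x`: near `x` there is a
homeomorphism of the ambient space with `Y × ℝ^k` taking `S` to `Y × {0}`. -/
def HasCodimAt {X : Type} [TopologicalSpace X] (S : Set X) (k : ℕ) (x : X) : Prop :=
  ∃ U : Set X, IsOpen U ∧ x ∈ U ∧
    ∃ (Y : Type) (_ : TopologicalSpace Y) (h : U ≃ₜ Y × (Fin k → ℝ)),
      ∀ u : U, (u : X) ∈ S ↔ (h u).2 = 0

/-- `S` has codimension `k` (at each of its points). -/
def HasCodim {X : Type} [TopologicalSpace X] (S : Set X) (k : ℕ) : Prop :=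
  ∀ x ∈ S, HasCodimAt S k x

/-- A cell: a connected set of codimension `k` whose boundary contains a relatively
open and dense subset of codimension `k+1`. -/
def IsCell {X : Type} [TopologicalSpace X] (S : Set X) : Prop :=
  ∃ k : ℕ, IsConnected S ∧ HasCodim S k ∧
    ∃ B : Set X, B ⊆ frontier S ∧ HasCodim B (k + 1) ∧
      (∃ O : Set X, IsOpen O ∧ B = O ∩ frontier S) ∧ frontier S ⊆ closure B

/-- `S ⊆ E` is an embedded `C^1` Banach submanifold of codimension `b`: near each
of its points it is the graph of a `C^1` map from a closed complemented subspace
whose complement has dimension `b`. -/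
def IsC1SubmanifoldOfCodim {E : Type*} [NormedAddCommGroup E] [NormedSpace ℝ E]
    (S : Set E) (b : ℕ) : Prop :=
  ∀ x ∈ S, ∃ F G : Submodule ℝ E, IsClosed (F : Set E) ∧ IsClosed (G : Set E) ∧
    IsCompl F G ∧ Module.finrank ℝ G = b ∧
    ∃ (ψ : F → G) (U : Set E), ContDiff ℝ 1 (fun u : F => (ψ u : E)) ∧
      IsOpen U ∧ x ∈ U ∧
      ∀ y ∈ U, (y ∈ S ↔ ∃ u : F, (u : E) + (ψ u : E) = y)

/-! ### Period-doubling renormalization and its basin -/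

/-- An affine map with nonzero slope. -/
def IsAffine (Λ : ℝ → ℝ) : Prop := ∃ α β : ℝ, α ≠ 0 ∧ ∀ x, Λ x = α * x + β

/-- `g` is a period-doubling renormalization of `f`: `g = Λ⁻¹ ∘ f² ∘ Λ`, where
`Λ : I → J` is an affine bijection onto a restrictive interval `J` of period 2. -/
def IsPDRenormStep (f g : ℝ → ℝ) : Prop :=
  ∃ (a b : ℝ) (Λ : ℝ → ℝ), RestrictiveInterval f (Set.Icc a b) 2 ∧ IsAffine Λ ∧
    Λ '' unitI = Set.Icc a b ∧ ∀ x ∈ unitI, Λ (g x) = f (f (Λ x))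

/-- A unimodal map of `I` whose (unique) turning point `c` is a critical point of
order `ℓ` and a maximum. -/
def UnimodalOfOrder (k : ℕ∞) (ℓ : ℕ) (g : ℝ → ℝ) (c : ℝ) : Prop :=
  Multimodal g ∧ c ∈ Set.Ioo (-1 : ℝ) 1 ∧ CritOrder k g c ℓ ∧
  MonotoneOn g (Set.Icc (-1) c) ∧ AntitoneOn g (Set.Icc c 1)

/-- `f` belongs to the basin of a unimodal polynomial-like fixed point of the
period-doubling renormalization operator of degree `d`: there is a unimodal fixed
point `F⋆` of period-doubling renormalization extending to a real-symmetric
polynomial-like map of degree `d`, and a sequence of successive period-doubling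
renormalizations of `f` converging (uniformly on `I`) to `F⋆`. -/
def InBasinOfUnimodalPDFixedPoint (f : ℝ → ℝ) (d : ℕ) : Prop :=
  ∃ Fstar : ℝ → ℝ, IsPDRenormStep Fstar Fstar ∧
    (∃ c : ℝ, UnimodalOfOrder ⊤ d Fstar c) ∧
    (∃ (FC : ℂ → ℂ) (U V : Set ℂ), PolyLikeMap FC U V d ∧ RealSymPL FC U V ∧
      (∀ x ∈ unitI, (x : ℂ) ∈ U) ∧ ∀ x ∈ unitI, FC (x : ℂ) = ((Fstar x : ℝ) : ℂ)) ∧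
    ∃ g : ℕ → ℝ → ℝ, g 0 = f ∧ (∀ n, IsPDRenormStep (g n) (g (n + 1))) ∧
      TendstoUniformlyOn (fun n x => g n x) Fstar Filter.atTop unitI

/-- `g` and `f` are topologically conjugate as maps of `I`. -/
def TopConjI (g f : ℝ → ℝ) : Prop :=
  ∃ h : ℝ → ℝ, ContinuousOn h unitI ∧ Set.BijOn h unitI unitI ∧
    ContinuousOn (Function.invFunOn h unitI) unitI ∧
    ∀ x ∈ unitI, h (g x) = f (h x)

/-! ### Spaces of maps as topological spaces -/

/-- The space `A^r_{even,b}(I)` with the `C^r` topology. -/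
def ArEvenSpace (r : ℝ) (b : ℕ) : Type := {f : ℝ → ℝ // SpaceArEven r b f}

instance (r : ℝ) (b : ℕ) : TopologicalSpace (ArEvenSpace r b) :=
  TopologicalSpace.induced Subtype.val (crTop r)

/-- The space `A^r_{b̲}(I)` with the `C^r` topology. -/
def ArBSpace (r : ℝ) {b : ℕ} (bvec : Fin b → ℕ) : Type := {f : ℝ → ℝ // SpaceAr r bvec f}

instance (r : ℝ) {b : ℕ} (bvec : Fin b → ℕ) : TopologicalSpace (ArBSpace r bvec) :=
  TopologicalSpace.induced Subtype.val (crTop r)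

/-- The space `A_{b̲}(I)` of real-analytic maps, as a topological space. -/
def AnalSpace {b : ℕ} (bvec : Fin b → ℕ) : Type := {f : ℝ → ℝ // SpaceAomega bvec f}

instance {b : ℕ} (bvec : Fin b → ℕ) : TopologicalSpace (AnalSpace bvec) :=
  TopologicalSpace.induced Subtype.val c0Top

end
noncomputable section
namespace S11
open Polynomial


/-- The special polynomial `t·Xˡ − t − 1`. -/
noncomputable def spp (p : ℕ × ℝ) : Polynomial ℝ := C p.2 * X ^ p.1 + C (-p.2 - 1)

lemma eval_spp (p : ℕ × ℝ) (x : ℝ) : (spp p).eval x = p.2 * x ^ p.1 + (-p.2 - 1) := by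
  simp [spp]

noncomputable def compList (Ps : List (Polynomial ℝ)) : Polynomial ℝ :=
  Ps.foldl (fun acc P => P.comp acc) X

lemma compList_foldl (Ps : List (Polynomial ℝ)) (A : Polynomial ℝ) :
    Ps.foldl (fun acc P => P.comp acc) A = (compList Ps).comp A := by
  induction Ps generalizing A with
  | nil => simp [compList]
  | cons P Ps ih =>
      show Ps.foldl _ (P.comp A) = (compList (P :: Ps)).comp A
      rw [ih]
      have : compList (P :: Ps) = (compList Ps).comp P := by
        show Ps.foldl _ (P.comp X) = _
        rw [ih, comp_X]
      rw [this, comp_assoc]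

lemma compList_cons (P : Polynomial ℝ) (Ps : List (Polynomial ℝ)) :
    compList (P :: Ps) = (compList Ps).comp P := by
  show Ps.foldl _ (P.comp X) = _
  rw [compList_foldl, comp_X]

lemma foldl_eval (Ps : List (Polynomial ℝ)) (qs : List (ℝ → ℝ))
    (h : List.Forall₂ (fun (f : ℝ → ℝ) (P : Polynomial ℝ) => ∀ x, f x = P.eval x) qs Ps) :
    ∀ x, qs.foldl (fun y g => g y) x = (compList Ps).eval x := by
  induction h with
  | nil => intro x; simp [compList]
  | @cons f P qs Ps hfP _ ih =>
      intro x
      show qs.foldl _ (f x) = _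
      rw [ih (f x), compList_cons, eval_comp, hfP x]

lemma natDegree_compList (L : List (ℕ × ℝ)) (h : ∀ p ∈ L, 0 < p.1 ∧ p.2 ≠ 0) :
    (compList (L.map spp)).natDegree = (L.map Prod.fst).prod := by
  induction L with
  | nil => simp [compList]
  | cons p L ih =>
      have hd : (spp p).natDegree = p.1 := by
        rw [spp, natDegree_add_C, natDegree_C_mul_X_pow _ _ (h p (by simp)).2]
      simp only [List.map_cons, compList_cons, natDegree_comp, hd, List.prod_cons,
        ih (fun r hr => h r (by simp [hr]))]
      ring

lemma even_eval (p : ℕ × ℝ) (L : List (ℕ × ℝ)) (hp : Even p.1) (z : ℝ) :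
    (compList ((p :: L).map spp)).eval (-z) = (compList ((p :: L).map spp)).eval z := by
  simp only [List.map_cons, compList_cons, eval_comp, eval_spp, hp.neg_pow]

lemma eval_ray (P Q : Polynomial ℝ) (h : ∀ z ∈ Set.Ici (0:ℝ), P.eval z = Q.eval z) : P = Q :=
  eq_of_infinite_eval_eq _ _ ((Set.Ici_infinite (0:ℝ)).mono (fun z hz => h z hz))

lemma sym_zero (g : Polynomial ℝ) (hd : g.natDegree ≠ 0) (μ : ℝ)
    (heven : ∀ z, g.eval (-z) = g.eval z)
    (hsym : ∀ u, g.eval (μ + u) = g.eval (μ - u)) : μ = 0 := by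
  by_contra hμ
  have hper : ∀ z : ℝ, g.eval (z + 2*μ) = g.eval z := by
    intro z
    calc g.eval (z + 2*μ) = g.eval (μ + (z + μ)) := by ring_nf
      _ = g.eval (μ - (z + μ)) := hsym _
      _ = g.eval (-z) := by ring_nf
      _ = g.eval z := heven z
  have hn : ∀ n : ℕ, g.eval (2*μ*n) = g.eval 0 := by
    intro n
    induction n with
    | zero => norm_num
    | succ n ih =>
        have h1 : 2*μ*(((n+1 : ℕ)) : ℝ) = 2*μ*(n:ℝ) + 2*μ := by push_cast; ring
        rw [h1, hper, ih]
  have hinj : Function.Injective (fun n : ℕ => 2*μ*(n:ℝ)) := by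
    intro m n hmn
    have h2 : (2*μ) ≠ 0 := by simpa using hμ
    have : (m : ℝ) = n := mul_left_cancel₀ h2 hmn
    exact_mod_cast this
  have hg : g = C (g.eval 0) := by
    apply eq_of_infinite_eval_eq
    apply (Set.infinite_range_of_injective hinj).mono
    rintro _ ⟨n, rfl⟩
    simp [hn n]
  rw [hg] at hd
  simp at hd

lemma affine_of_comp_eq (g g' : Polynomial ℝ) (ℓ : ℕ) (t t' : ℝ) (hpos : 0 < ℓ)
    (hEq : g.comp (spp (ℓ, t)) = g'.comp (spp (ℓ, t'))) :
    ∀ z : ℝ, g.eval (t*z + (-t-1)) = g'.eval (t'*z + (-t'-1)) := by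
  have hPQ : g.comp (C t * X + C (-t-1)) = g'.comp (C t' * X + C (-t'-1)) := by
    apply eval_ray
    intro z hz
    have hx : (z ^ ((ℓ:ℝ)⁻¹)) ^ ℓ = z := Real.rpow_inv_natCast_pow hz hpos.ne'
    have h2 := congrArg (eval (z ^ ((ℓ:ℝ)⁻¹))) hEq
    simp only [eval_comp, eval_spp, eval_add, eval_mul, eval_C, eval_X, eval_pow, hx] at h2 ⊢
    exact h2
  intro z
  have h2 := congrArg (eval z) hPQ
  simpa only [eval_comp, eval_add, eval_mul, eval_C, eval_X] using h2

lemma step (g g' : Polynomial ℝ) (t t' : ℝ) (ht : t ≠ 0) (ht' : t' ≠ 0)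
    (hgeven : ∀ z, g.eval (-z) = g.eval z)
    (hg'even : ∀ z, g'.eval (-z) = g'.eval z)
    (hd : g'.natDegree ≠ 0)
    (haff : ∀ z : ℝ, g.eval (t*z + (-t-1)) = g'.eval (t'*z + (-t'-1))) :
    t = t' ∧ g = g' := by
  have hlam : t'/t ≠ 0 := div_ne_zero ht' ht
  have hw : ∀ w : ℝ, g.eval w = g'.eval ((t'/t)*w + ((-t'-1) - (t'/t)*(-t-1))) := by
    intro w
    have h1 : t * ((w - (-t-1))/t) + (-t-1) = w := by field_simp; ring
    have h2 : t' * ((w - (-t-1))/t) + (-t'-1)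
        = (t'/t)*w + ((-t'-1) - (t'/t)*(-t-1)) := by field_simp; ring
    have h3 := haff ((w - (-t-1))/t)
    rw [h1, h2] at h3
    exact h3
  set μ : ℝ := (-t'-1) - (t'/t)*(-t-1) with hμdef
  have hsym : ∀ u : ℝ, g'.eval (μ + u) = g'.eval (μ - u) := by
    intro u
    have hc1 : (t'/t) * (u/(t'/t)) + μ = μ + u := by field_simp; ring
    have hc2 : (t'/t) * (-(u/(t'/t))) + μ = μ - u := by field_simp; ring
    have e1 := hw (u/(t'/t))
    have e2 := hw (-(u/(t'/t)))
    rw [hc1] at e1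
    rw [hc2] at e2
    rw [← e1, ← e2, hgeven]
  have hμ : μ = 0 := sym_zero g' hd μ hg'even hsym
  have htt : t = t' := by
    rw [hμdef] at hμ
    field_simp at hμ
    linarith
  refine ⟨htt, ?_⟩
  apply Polynomial.funext
  intro w
  have h4 := hw w
  rw [hμ] at h4
  rw [htt] at h4
  rw [div_self ht'] at h4
  simpa using h4

lemma main : ∀ (L L' : List (ℕ × ℝ)),
    L.map Prod.fst = L'.map Prod.fst →
    (∀ p ∈ L, Even p.1 ∧ 0 < p.1 ∧ p.2 ≠ 0) →
    (∀ p ∈ L', Even p.1 ∧ 0 < p.1 ∧ p.2 ≠ 0) →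
    compList (L.map spp) = compList (L'.map spp) → L = L' := by
  intro L
  induction L with
  | nil =>
      intro L' hf _ _ _
      have : L'.map Prod.fst = [] := hf.symm
      simpa using (List.map_eq_nil_iff.mp this).symm
  | cons p L ih =>
      intro L' hfst hL hL' hEq
      match L' with
      | [] => simp at hfst
      | p' :: L'' =>
        obtain ⟨ℓ, t⟩ := p
        obtain ⟨ℓ', t'⟩ := p'
        simp only [List.map_cons, List.cons.injEq] at hfst
        obtain ⟨hℓ, hfst2⟩ := hfst
        subst hℓ
        obtain ⟨hev, hpos, ht⟩ := hL (ℓ, t) (by simp)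
        obtain ⟨-, -, ht'⟩ := hL' (ℓ, t') (by simp)
        have hEq' : (compList (L.map spp)).comp (spp (ℓ, t))
            = (compList (L''.map spp)).comp (spp (ℓ, t')) := by
          simpa only [List.map_cons, compList_cons] using hEq
        have haff := affine_of_comp_eq _ _ ℓ t t' hpos hEq'
        match L, L'', hfst2, haff, hEq', ih, hL, hL' with
        | [], [], _, haff, _, _, _, _ =>
            have h0 := haff 0
            simp only [compList, List.map_nil, List.foldl_nil, eval_X, mul_zero,
              zero_add] at h0
            have : t = t' := by linarith
            rw [this]
        | r :: L2, r' :: L2', hfst2, haff, hEq', ih, hL, hL' =>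
            have hgeven : ∀ z, (compList ((r :: L2).map spp)).eval (-z)
                = (compList ((r :: L2).map spp)).eval z :=
              even_eval r L2 (hL r (by simp)).1
            have hg'even : ∀ z, (compList ((r' :: L2').map spp)).eval (-z)
                = (compList ((r' :: L2').map spp)).eval z :=
              even_eval r' L2' (hL' r' (by simp)).1
            have hd : (compList ((r' :: L2').map spp)).natDegree ≠ 0 := by
              rw [natDegree_compList _ (fun s hs => ⟨(hL' s (by simp [hs])).2.1,
                (hL' s (by simp [hs])).2.2⟩)]
              have hpos' : 0 < ((r' :: L2').map Prod.fst).prod := by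
                apply List.prod_pos
                intro x hx
                simp only [List.mem_map] at hx
                obtain ⟨s, hs, rfl⟩ := hx
                exact (hL' s (by simp [hs])).2.1
              exact hpos'.ne'
            obtain ⟨htt, hgg⟩ := step _ _ t t' ht ht' hgeven hg'even hd haff
            have hLL : r :: L2 = r' :: L2' :=
              ih (r' :: L2') hfst2 (fun s hs => hL s (by simp [hs]))
                (fun s hs => hL' s (by simp [hs])) hgg
            rw [htt, hLL]

lemma qform {ℓ : ℕ} {av : ℝ} {qf : ℝ → ℝ} (hev : Even ℓ) (hpos : 0 < ℓ)
    (hQ : IsQFactor ℓ av qf) (hm1 : qf (-1) = -1) (h1 : qf 1 = -1) :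
    ∃ α : ℝ, α ≠ 0 ∧ ∀ x : ℝ, α * qf x = (α*x)^ℓ + av := by
  obtain ⟨α, β, hα, -, hrel⟩ := hQ
  have e1 := hrel 1
  have e2 := hrel (-1)
  rw [h1] at e1
  rw [hm1] at e2
  have hpow : (α*1 + β)^ℓ = (α*(-1) + β)^ℓ := by linarith
  have habs : |α*1 + β| = |α*(-1) + β| := by
    apply (pow_left_strictMonoOn₀ (M₀ := ℝ) hpos.ne').injOn (abs_nonneg (α*1 + β)) (abs_nonneg (α*(-1) + β))
    show |α*1 + β|^ℓ = |α*(-1) + β|^ℓ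
    rw [hev.pow_abs, hev.pow_abs, hpow]
  have hβ : β = 0 := by
    rcases abs_eq_abs.mp habs with h | h
    · exact absurd (by linarith : α = 0) hα
    · linarith
  subst hβ
  refine ⟨α, hα, fun x => ?_⟩
  have := hrel x
  simpa using this

lemma qform' {ℓ : ℕ} {av : ℝ} {qf : ℝ → ℝ} (hev : Even ℓ) (hpos : 0 < ℓ)
    (hQ : IsQFactor ℓ av qf) (hm1 : qf (-1) = -1) (h1 : qf 1 = -1) :
    ∃ t : ℝ, t ≠ 0 ∧ ∀ x : ℝ, qf x = t * x^ℓ + (-t-1) := by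
  obtain ⟨α, hα, hrel⟩ := qform hev hpos hQ hm1 h1
  refine ⟨α^(ℓ-1), pow_ne_zero _ hα, fun x => ?_⟩
  have hαp : α^ℓ = α * α^(ℓ-1) := by
    conv_lhs => rw [show ℓ = 1 + (ℓ-1) by omega]
    rw [pow_add, pow_one]
  have e1 := hrel 1
  rw [h1] at e1
  have ex := hrel x
  rw [mul_pow] at ex
  have hav : av = -α - α^ℓ := by rw [mul_pow, one_pow] at e1; linarith
  apply mul_left_cancel₀ hα
  rw [ex, hav, hαp]
  ring

lemma auniq {ℓ : ℕ} {av av' : ℝ} {qf qf' : ℝ → ℝ} (hev : Even ℓ) (hpos : 0 < ℓ)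
    (hQ : IsQFactor ℓ av qf) (hQ' : IsQFactor ℓ av' qf')
    (hm1 : qf (-1) = -1) (h1 : qf 1 = -1) (hm1' : qf' (-1) = -1) (h1' : qf' 1 = -1)
    (hqq : ∀ x : ℝ, qf x = qf' x) : av = av' := by
  obtain ⟨α, hα, hrel⟩ := qform hev hpos hQ hm1 h1
  obtain ⟨α', hα', hrel'⟩ := qform hev hpos hQ' hm1' h1'
  have h0 := hrel 0
  have h0' := hrel' 0
  rw [mul_zero, zero_pow hpos.ne'] at h0 h0'
  -- h0 : α * qf 0 = 0 + av
  have e1 := hrel 1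
  have e1' := hrel' 1
  rw [h1, mul_one] at e1
  rw [h1', mul_one] at e1'
  -- e1 : α * (-1) = α^ℓ + av
  have hA : α^(ℓ-1) = -1 - qf 0 := by
    have hαp : α^ℓ = α * α^(ℓ-1) := by
      conv_lhs => rw [show ℓ = 1 + (ℓ-1) by omega]
      rw [pow_add, pow_one]
    apply mul_left_cancel₀ hα
    rw [← hαp]
    nlinarith [e1, h0]
  have hA' : α'^(ℓ-1) = -1 - qf' 0 := by
    have hαp : α'^ℓ = α' * α'^(ℓ-1) := by
      conv_lhs => rw [show ℓ = 1 + (ℓ-1) by omega]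
      rw [pow_add, pow_one]
    apply mul_left_cancel₀ hα'
    rw [← hαp]
    nlinarith [e1', h0']
  have hodd : Odd (ℓ - 1) := by
    obtain ⟨m, hm⟩ := hev
    exact ⟨m - 1, by omega⟩
  have hαα : α = α' := by
    apply hodd.strictMono_pow.injective
    show α^(ℓ-1) = α'^(ℓ-1)
    rw [hA, hA', hqq 0]
  have : α * qf 0 = av := by linarith [h0]
  have h2 : α' * qf' 0 = av' := by linarith [h0']
  rw [← this, ← h2, hαα, hqq 0]

lemma forall₂_ofFn {n : ℕ} (f : Fin n → ℝ → ℝ) (P : Fin n → Polynomial ℝ)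
    (h : ∀ i, ∀ x, f i x = (P i).eval x) :
    List.Forall₂ (fun (g : ℝ → ℝ) (Q : Polynomial ℝ) => ∀ x, g x = Q.eval x)
      (List.ofFn f) (List.ofFn P) := by
  rw [List.forall₂_iff_get]
  refine ⟨by simp, fun i h1 h2 => ?_⟩
  simp only [List.get_eq_getElem, List.getElem_ofFn]
  exact h _

end S11
end

/-- Every polynomial `p` of type `b̲` (a vector of positive even
integers) has a unique decomposition: the coefficients `a₁, …, a_b`, and hence the
factor maps `q₁, …, q_b` (as maps of `I`), are uniquely determined by `p`. -/
theorem statement_11 {b : ℕ} (bvec : Fin b → ℕ)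
    (heven : ∀ i, Even (bvec i) ∧ 0 < bvec i)
    (p : ℝ → ℝ) (a a' : Fin b → ℝ) (q q' : Fin b → ℝ → ℝ)
    (h : IsPolyType bvec p a q) (h' : IsPolyType bvec p a' q') :
    a = a' ∧ ∀ (i : Fin b), ∀ x ∈ unitI, q i x = q' i x := by
  classical
  have hq : ∀ i, ∃ t : ℝ, t ≠ 0 ∧ ∀ x : ℝ, q i x = t * x^(bvec i) + (-t-1) :=
    fun i => S11.qform' (heven i).1 (heven i).2 (h.factor i) (h.endpts i).1 (h.endpts i).2
  have hq' : ∀ i, ∃ t : ℝ, t ≠ 0 ∧ ∀ x : ℝ, q' i x = t * x^(bvec i) + (-t-1) :=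
    fun i => S11.qform' (heven i).1 (heven i).2 (h'.factor i) (h'.endpts i).1 (h'.endpts i).2
  choose t ht htq using hq
  choose t' ht' htq' using hq'
  have hF : ∀ x : ℝ, (List.ofFn q).foldl (fun y g => g y) x
      = (S11.compList ((List.ofFn (fun i => (bvec i, t i))).map S11.spp)).eval x := by
    intro x
    apply S11.foldl_eval
    rw [List.map_ofFn]
    exact S11.forall₂_ofFn q _ (fun i x => by
      rw [htq i x, Function.comp_apply, S11.eval_spp])
  have hF' : ∀ x : ℝ, (List.ofFn q').foldl (fun y g => g y) x
      = (S11.compList ((List.ofFn (fun i => (bvec i, t' i))).map S11.spp)).eval x := by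
    intro x
    apply S11.foldl_eval
    rw [List.map_ofFn]
    exact S11.forall₂_ofFn q' _ (fun i x => by
      rw [htq' i x, Function.comp_apply, S11.eval_spp])
  have hpoly : S11.compList ((List.ofFn (fun i => (bvec i, t i))).map S11.spp)
      = S11.compList ((List.ofFn (fun i => (bvec i, t' i))).map S11.spp) := by
    apply Polynomial.funext
    intro x
    rw [← hF x, ← hF' x, ← h.comp x, ← h'.comp x]
  have hcond : ∀ s ∈ List.ofFn (fun i => (bvec i, t i)), Even s.1 ∧ 0 < s.1 ∧ s.2 ≠ 0 := by
    intro s hs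
    rw [List.mem_ofFn] at hs
    obtain ⟨i, rfl⟩ := hs
    exact ⟨(heven i).1, (heven i).2, ht i⟩
  have hcond' : ∀ s ∈ List.ofFn (fun i => (bvec i, t' i)), Even s.1 ∧ 0 < s.1 ∧ s.2 ≠ 0 := by
    intro s hs
    rw [List.mem_ofFn] at hs
    obtain ⟨i, rfl⟩ := hs
    exact ⟨(heven i).1, (heven i).2, ht' i⟩
  have hfst : (List.ofFn (fun i => (bvec i, t i))).map Prod.fst
      = (List.ofFn (fun i => (bvec i, t' i))).map Prod.fst := by
    rw [List.map_ofFn, List.map_ofFn]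
    rfl
  have hLL := S11.main _ _ hfst hcond hcond' hpoly
  rw [List.ofFn_inj] at hLL
  have htt : ∀ i, t i = t' i := fun i => congrArg Prod.snd (congrFun hLL i)
  have hqq : ∀ i, ∀ x : ℝ, q i x = q' i x := fun i x => by
    rw [htq i x, htq' i x, htt i]
  refine ⟨funext fun i => ?_, fun i x _ => hqq i x⟩
  exact S11.auniq (heven i).1 (heven i).2 (h.factor i) (h'.factor i)
    (h.endpts i).1 (h.endpts i).2 (h'.endpts i).1 (h'.endpts i).2 (hqq i)
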